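/- (Radon–Nikodym, converse part) Let φ, ψ be α-completely positive maps from G to L(H) with ψ ≤_u φ (there exists λ > 0 such that λφ − ψ is α-completely positive). Then there exists a unique positive operator T on H_φ commuting with every π_φ(g) and with J_φ, such that ψ(g) = V_φ* T π_φ(g) V_φ for all g ∈ G. -/

import Mathlib

open scoped ComplexOrder

noncomputable section

def IsInvolution (G : Type*) [Group G] (α : G → G) : Prop :=
  (∀ g, α (α g) = g) ∧ α 1 = 1 ∧ ∀ g : G, α g⁻¹ = (α g)⁻¹

def IsAlphaCP {G : Type*} [Group G] (α : G → G)
    {H : Type*} [NormedAddCommGroup H] [InnerProductSpace ℂ H] [CompleteSpace H]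
    (φ : G → H →L[ℂ] H) : Prop :=
  (∀ g₁ g₂ : G, φ (α g₁ * α g₂) = φ (α (g₁ * g₂)) ∧ φ (α (g₁ * g₂)) = φ (g₁ * g₂)) ∧
  (∀ (n : ℕ) (g : Fin n → G) (ξ : Fin n → H),
    0 ≤ ∑ i, ∑ j, (inner ℂ (φ ((α (g i))⁻¹ * g j) (ξ j)) (ξ i) : ℂ)) ∧
  (∃ K > (0 : ℝ), ∀ (n : ℕ) (g : Fin n → G) (ξ : Fin n → H),
    ∑ i, ∑ j, (inner ℂ (((ContinuousLinearMap.adjoint (φ (g i))) ∘L φ (g j)) (ξ j)) (ξ i) : ℂ) ≤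
      (K : ℂ) * ∑ i, ∑ j, (inner ℂ (φ ((α (g i))⁻¹ * g j) (ξ j)) (ξ i) : ℂ)) ∧
  (∀ g : G, ∃ M > (0 : ℝ), ∀ (n : ℕ) (gs : Fin n → G) (ξ : Fin n → H),
    ∑ i, ∑ j, (inner ℂ (φ ((α (g * gs i))⁻¹ * (g * gs j)) (ξ j)) (ξ i) : ℂ) ≤
      (M : ℂ) * ∑ i, ∑ j, (inner ℂ (φ ((α (gs i))⁻¹ * gs j) (ξ j)) (ξ i) : ℂ))

structure KreinDilation (G : Type*) [Group G] (α : G → G)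
    (H : Type*) [NormedAddCommGroup H] [InnerProductSpace ℂ H] [CompleteSpace H]
    (φ : G → H →L[ℂ] H) where
  K : Type
  [nK : NormedAddCommGroup K]
  [iK : InnerProductSpace ℂ K]
  [cK : CompleteSpace K]
  J : K →L[ℂ] K
  rep : G → K →L[ℂ] K
  V : H →L[ℂ] K
  J_sa : ContinuousLinearMap.adjoint J = J
  J_inv : J ∘L J = 1
  rep_one : rep 1 = 1
  rep_mul : ∀ g g', rep (g * g') = rep g ∘L rep g'
  rep_inv : ∀ g, rep g⁻¹ = J ∘L (ContinuousLinearMap.adjoint (rep g)) ∘L J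
  eq : ∀ g, φ g = (ContinuousLinearMap.adjoint V) ∘L rep g ∘L V
  minimal : (Submodule.span ℂ {x : K | ∃ g ξ, x = rep g (V ξ)}).topologicalClosure = ⊤
  commJ : ∀ g, J ∘L rep g ∘L V = rep (α g) ∘L V

attribute [instance] KreinDilation.nK KreinDilation.iK KreinDilation.cK

section Sesq

section Sesq

open ComplexConjugate

variable {M : Type*} [AddCommGroup M] [Module ℂ M]

lemma sesq_herm (B : M → M → ℂ)
    (haddl : ∀ f f' h, B (f + f') h = B f h + B f' h)
    (haddr : ∀ f h h', B f (h + h') = B f h + B f h')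
    (hsmull : ∀ (c : ℂ) (f h : M), B (c • f) h = c * B f h)
    (hsmulr : ∀ (c : ℂ) (f h : M), B f (c • h) = conj c * B f h)
    (hdiag : ∀ f, 0 ≤ B f f) (f h : M) :
    B h f = conj (B f h) := by
  have expand : ∀ c : ℂ, B (f + c • h) (f + c • h)
      = B f f + conj c * B f h + c * B h f + c * conj c * B h h := by
    intro c
    rw [haddl, haddr, haddr, hsmull, hsmull, hsmulr, hsmulr]
    ring
  have him : ∀ g, (B g g).im = 0 := fun g => ((Complex.nonneg_iff).mp (hdiag g)).2.symm
  have e1 := him (f + (1 : ℂ) • h)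
  rw [expand 1] at e1
  have e2 := him (f + Complex.I • h)
  rw [expand Complex.I] at e2
  simp only [map_one, one_mul, Complex.add_im, Complex.mul_im, Complex.conj_I,
    Complex.I_re, Complex.I_im, Complex.neg_re, Complex.neg_im, him f, him h,
    Complex.mul_re, Complex.one_re, Complex.one_im] at e1 e2
  apply Complex.ext <;>
    simp only [Complex.conj_re, Complex.conj_im] <;> linarith

lemma sesq_cs (B : M → M → ℂ)
    (haddl : ∀ f f' h, B (f + f') h = B f h + B f' h)
    (haddr : ∀ f h h', B f (h + h') = B f h + B f h')
    (hsmull : ∀ (c : ℂ) (f h : M), B (c • f) h = c * B f h)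
    (hsmulr : ∀ (c : ℂ) (f h : M), B f (c • h) = conj c * B f h)
    (hdiag : ∀ f, 0 ≤ B f f) (f h : M) :
    ‖B f h‖ ^ 2 ≤ (B f f).re * (B h h).re := by
  have herm := fun f h => sesq_herm B haddl haddr hsmull hsmulr hdiag f h
  have hre : ∀ g, 0 ≤ (B g g).re := fun g => ((Complex.nonneg_iff).mp (hdiag g)).1
  have expand : ∀ c : ℂ, B (f + c • h) (f + c • h)
      = B f f + conj c * B f h + c * B h f + c * conj c * B h h := by
    intro c
    rw [haddl, haddr, haddr, hsmull, hsmull, hsmulr, hsmulr]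
    ring
  set a := B f h with ha
  rcases eq_or_ne a 0 with h0 | h0
  · rw [h0]
    simpa using mul_nonneg (hre f) (hre h)
  · have hna : 0 < ‖a‖ ^ 2 := pow_pos (norm_pos_iff.mpr h0) 2
    have hkey : ∀ u : ℝ, 0 ≤ (B f f).re - 2 * u * ‖a‖ ^ 2 + u ^ 2 * ‖a‖ ^ 2 * (B h h).re := by
      intro u
      have e := hre (f + (-(u : ℂ) * a) • h)
      rw [expand] at e
      have hval : B f f + conj (-(u : ℂ) * a) * a + (-(u : ℂ) * a) * B h f
          + (-(u : ℂ) * a) * conj (-(u : ℂ) * a) * B h h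
          = B f f + Complex.ofReal (-(2 * u * ‖a‖ ^ 2)) + Complex.ofReal (u ^ 2 * ‖a‖ ^ 2) * B h h := by
        rw [herm f h, ← ha]
        have h1 : conj a * a = ((‖a‖ : ℂ)) ^ 2 := RCLike.conj_mul a
        have h2 : a * conj a = ((‖a‖ : ℂ)) ^ 2 := RCLike.mul_conj a
        simp only [map_mul, map_neg, Complex.conj_ofReal]
        push_cast
        linear_combination (-(u : ℂ)) * h1 + (-(u : ℂ) + (u : ℂ) ^ 2 * B h h) * h2
      rw [hval] at e
      simp only [Complex.add_re, Complex.ofReal_re, Complex.re_ofReal_mul] at e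
      linarith
    obtain ⟨r, hr, hrpos⟩ : ∃ r : ℝ, ‖a‖ ^ 2 = r ∧ 0 < r := ⟨‖a‖ ^ 2, rfl, hna⟩
    rw [hr] at hkey ⊢
    rcases (hre h).eq_or_lt with hd2 | hd2
    · exfalso
      have hk := hkey (((B f f).re + 1) / (2 * r))
      rw [← hd2] at hk
      have ht : 2 * (((B f f).re + 1) / (2 * r)) * r = (B f f).re + 1 := by
        field_simp
      rw [mul_zero] at hk
      linarith [hk, ht]
    · have hk := hkey (1 / (B h h).re)
      have h2 : (B h h).re ≠ 0 := ne_of_gt hd2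
      have e1 : 2 * (1 / (B h h).re) * r = 2 * r / (B h h).re := by ring
      have e2 : (1 / (B h h).re) ^ 2 * r * (B h h).re = r / (B h h).re := by
        field_simp
      rw [e1, e2] at hk
      have : r / (B h h).re ≤ (B f f).re := by
        have : 2 * r / (B h h).re - r / (B h h).re = r / (B h h).re := by ring
        linarith
      calc r = r / (B h h).re * (B h h).re := by field_simp
        _ ≤ (B f f).re * (B h h).re := by
            exact mul_le_mul_of_nonneg_right this (le_of_lt hd2)

end Sesq
section Aux
set_option linter.unusedSectionVars false

open ContinuousLinearMap ComplexConjugate Finsupp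

local notation "⟪" x ", " y "⟫" => @inner ℂ _ _ x y

variable {G : Type*} [Group G] (α : G → G)
    {H : Type*} [NormedAddCommGroup H] [InnerProductSpace ℂ H] [CompleteSpace H]
    {φ : G → H →L[ℂ] H}

/-- The element `∑ rep g (V (f g))` of the dilation space. -/
def elF (D : KreinDilation G α H φ) : (G →₀ H) →ₗ[ℂ] D.K where
  toFun f := f.sum fun x ξ => D.rep x (D.V ξ)
  map_add' f g := Finsupp.sum_add_index' (fun x => by simp) (fun x ξ η => by simp)
  map_smul' c f := by
    show ((c • f).sum fun x ξ => D.rep x (D.V ξ)) = c • f.sum fun x ξ => D.rep x (D.V ξ)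
    rw [Finsupp.sum_smul_index' (fun x => by simp)]
    simp [map_smul, Finsupp.smul_sum]

lemma elF_apply (D : KreinDilation G α H φ) (f : G →₀ H) :
    elF α D f = f.sum fun x ξ => D.rep x (D.V ξ) := rfl

lemma elF_single (D : KreinDilation G α H φ) (g : G) (ξ : H) :
    elF α D (Finsupp.single g ξ) = D.rep g (D.V ξ) := by
  simp [elF, Finsupp.sum_single_index]

lemma elF_eq_sum (D : KreinDilation G α H φ) {f : G →₀ H} {s : Finset G}
    (hs : f.support ⊆ s) : elF α D f = ∑ x ∈ s, D.rep x (D.V (f x)) := by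
  rw [elF_apply]
  exact Finsupp.sum_of_support_subset f hs _ (fun x _ => by simp)

/-- The kernel form associated to a map `χ`. -/
def BF (χ : G → H →L[ℂ] H) (f h : G →₀ H) : ℂ :=
  ∑ x ∈ f.support, ∑ y ∈ h.support, ⟪χ ((α x)⁻¹ * y) (h y), f x⟫

lemma BF_eq_sum (χ : G → H →L[ℂ] H) {f h : G →₀ H} {s t : Finset G}
    (hs : f.support ⊆ s) (ht : h.support ⊆ t) :
    BF α χ f h = ∑ x ∈ s, ∑ y ∈ t, ⟪χ ((α x)⁻¹ * y) (h y), f x⟫ := by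
  rw [BF]
  rw [Finset.sum_subset hs (fun x _ hx => ?_)]
  · refine Finset.sum_congr rfl fun x _ => ?_
    refine (Finset.sum_subset ht fun y _ hy => ?_)
    rw [Finsupp.notMem_support_iff.mp hy]
    simp
  · refine Finset.sum_eq_zero fun y _ => ?_
    rw [Finsupp.notMem_support_iff.mp hx]
    simp

lemma BF_single_single (χ : G → H →L[ℂ] H) (x y : G) (ξ η : H) :
    BF α χ (Finsupp.single x ξ) (Finsupp.single y η) = ⟪χ ((α x)⁻¹ * y) η, ξ⟫ := by
  rw [BF_eq_sum α χ (Finsupp.support_single_subset) (Finsupp.support_single_subset)]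
  simp

lemma BF_add_left (χ : G → H →L[ℂ] H) (f f' h : G →₀ H) :
    BF α χ (f + f') h = BF α χ f h + BF α χ f' h := by
  classical
  rw [BF_eq_sum α χ (Finsupp.support_add (g₁ := f) (g₂ := f')) (subset_refl _),
      BF_eq_sum α χ (Finset.subset_union_left : f.support ⊆ f.support ∪ f'.support) (subset_refl _),
      BF_eq_sum α χ (Finset.subset_union_right : f'.support ⊆ f.support ∪ f'.support) (subset_refl _),
      ← Finset.sum_add_distrib]
  refine Finset.sum_congr rfl fun x _ => ?_
  rw [← Finset.sum_add_distrib]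
  refine Finset.sum_congr rfl fun y _ => ?_
  rw [Finsupp.add_apply, inner_add_right]

lemma BF_add_right (χ : G → H →L[ℂ] H) (f h h' : G →₀ H) :
    BF α χ f (h + h') = BF α χ f h + BF α χ f h' := by
  classical
  rw [BF_eq_sum α χ (subset_refl _) (Finsupp.support_add (g₁ := h) (g₂ := h')),
      BF_eq_sum α χ (subset_refl _) (Finset.subset_union_left : h.support ⊆ h.support ∪ h'.support),
      BF_eq_sum α χ (subset_refl _) (Finset.subset_union_right : h'.support ⊆ h.support ∪ h'.support),
      ← Finset.sum_add_distrib]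
  refine Finset.sum_congr rfl fun x _ => ?_
  rw [← Finset.sum_add_distrib]
  refine Finset.sum_congr rfl fun y _ => ?_
  rw [Finsupp.add_apply, map_add, inner_add_left]

lemma BF_smul_left (χ : G → H →L[ℂ] H) (c : ℂ) (f h : G →₀ H) :
    BF α χ (c • f) h = c * BF α χ f h := by
  rw [BF_eq_sum α χ (Finsupp.support_smul (b := c) (g := f)) (subset_refl _), BF, Finset.mul_sum]
  refine Finset.sum_congr rfl fun x _ => ?_
  rw [Finset.mul_sum]
  refine Finset.sum_congr rfl fun y _ => ?_
  rw [Finsupp.smul_apply, inner_smul_right]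

lemma BF_smul_right (χ : G → H →L[ℂ] H) (c : ℂ) (f h : G →₀ H) :
    BF α χ f (c • h) = conj c * BF α χ f h := by
  rw [BF_eq_sum α χ (subset_refl _) (Finsupp.support_smul (b := c) (g := h)), BF, Finset.mul_sum]
  refine Finset.sum_congr rfl fun x _ => ?_
  rw [Finset.mul_sum]
  refine Finset.sum_congr rfl fun y _ => ?_
  rw [Finsupp.smul_apply, map_smul, inner_smul_left]

lemma BF_nonneg {χ : G → H →L[ℂ] H} (hχ : IsAlphaCP α χ) (f : G →₀ H) :
    0 ≤ BF α χ f f := by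
  classical
  set s := f.support with hs
  set e := (Fintype.equivFin ↥s) with he
  have hcard : Fintype.card ↥s = s.card := Fintype.card_coe s
  have key := hχ.2.1 (Fintype.card ↥s) (fun i => ((e.symm i : ↥s) : G))
    (fun i => f ((e.symm i : ↥s) : G))
  rw [BF]
  have : ∑ x ∈ s, ∑ y ∈ s, ⟪χ ((α x)⁻¹ * y) (f y), f x⟫
      = ∑ i, ∑ j, ⟪χ ((α ((e.symm i : ↥s) : G))⁻¹ * ((e.symm j : ↥s) : G))
          (f ((e.symm j : ↥s) : G)), f ((e.symm i : ↥s) : G)⟫ := by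
    rw [← Finset.sum_coe_sort s, ← Equiv.sum_comp e.symm]
    refine Finset.sum_congr rfl fun i _ => ?_
    rw [← Finset.sum_coe_sort s, ← Equiv.sum_comp e.symm]
  rw [this]
  exact key

lemma kernel_shift {χ : G → H →L[ℂ] H}
    (hax : ∀ g₁ g₂ : G, χ (α g₁ * α g₂) = χ (α (g₁ * g₂)) ∧ χ (α (g₁ * g₂)) = χ (g₁ * g₂))
    (hα : IsInvolution G α) (x y : G) :
    χ (α (x⁻¹ * α y)) = χ ((α x)⁻¹ * y) := by
  have h := (hax x⁻¹ (α y)).1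
  rw [hα.2.2, hα.1] at h
  exact h.symm

variable (D : KreinDilation G α H φ)

lemma JJ_apply (u : D.K) : D.J (D.J u) = u := by
  have := congrArg (fun T : D.K →L[ℂ] D.K => T u) D.J_inv
  simpa using this

lemma JrepV (g : G) (ξ : H) : D.J (D.rep g (D.V ξ)) = D.rep (α g) (D.V ξ) := by
  have := congrArg (fun T : H →L[ℂ] D.K => T ξ) (D.commJ g)
  simpa using this

lemma J_inner (u v : D.K) : ⟪D.J u, v⟫ = ⟪u, D.J v⟫ := by
  conv_lhs => rw [← D.J_sa]
  rw [ContinuousLinearMap.adjoint_inner_left]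

lemma adj_rep (g : G) : adjoint (D.rep g) = D.J ∘L D.rep g⁻¹ ∘L D.J := by
  rw [D.rep_inv g]
  ext u
  simp [JJ_apply α D]

lemma repV_mul (g x : G) (ξ : H) :
    D.rep g (D.rep x (D.V ξ)) = D.rep (g * x) (D.V ξ) := by
  rw [D.rep_mul g x]; rfl

lemma inner_gen (hφ : IsAlphaCP α φ) (hα : IsInvolution G α) (x y : G) (ξ η : H) :
    ⟪D.rep y (D.V η), D.rep x (D.V ξ)⟫ = ⟪φ ((α x)⁻¹ * y) η, ξ⟫ := by
  have h1 : ⟪D.rep y (D.V η), D.rep x (D.V ξ)⟫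
      = ⟪adjoint (D.rep x) (D.rep y (D.V η)), D.V ξ⟫ := by
    rw [ContinuousLinearMap.adjoint_inner_left]
  rw [h1, adj_rep α D]
  have h2 : (D.J ∘L D.rep x⁻¹ ∘L D.J) (D.rep y (D.V η))
      = D.rep (α (x⁻¹ * α y)) (D.V η) := by
    simp only [ContinuousLinearMap.comp_apply]
    rw [JrepV α D, repV_mul α D, JrepV α D]
  rw [h2, ← ContinuousLinearMap.adjoint_inner_left D.V]
  have h3 : adjoint D.V ∘L D.rep (α (x⁻¹ * α y)) ∘L D.V = φ (α (x⁻¹ * α y)) :=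
    (D.eq _).symm
  have h4 : (adjoint D.V) (D.rep (α (x⁻¹ * α y)) (D.V η)) = φ (α (x⁻¹ * α y)) η := by
    have := congrArg (fun T : H →L[ℂ] H => T η) h3
    simpa using this
  rw [h4, kernel_shift α hφ.1 hα]

lemma inner_elF (hφ : IsAlphaCP α φ) (hα : IsInvolution G α) (f h : G →₀ H) :
    ⟪elF α D h, elF α D f⟫ = BF α φ f h := by
  rw [elF_eq_sum α D (subset_refl h.support), elF_eq_sum α D (subset_refl f.support), BF]
  rw [sum_inner]
  have : ∀ y ∈ h.support, ⟪D.rep y (D.V (h y)), ∑ x ∈ f.support, D.rep x (D.V (f x))⟫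
      = ∑ x ∈ f.support, ⟪φ ((α x)⁻¹ * y) (h y), f x⟫ := by
    intro y _
    rw [inner_sum]
    exact Finset.sum_congr rfl fun x _ => inner_gen α D hφ hα x y (f x) (h y)
  rw [Finset.sum_congr rfl this, Finset.sum_comm]

lemma BF_phi_diag (hφ : IsAlphaCP α φ) (hα : IsInvolution G α) (f : G →₀ H) :
    BF α φ f f = ((‖elF α D f‖ : ℂ)) ^ 2 := by
  rw [← inner_elF α D hφ hα, inner_self_eq_norm_sq_to_K]
  norm_num

lemma BF_dom {ψ : G → H →L[ℂ] H} (l : ℝ) (f h : G →₀ H) :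
    BF α (fun g => (l : ℂ) • φ g - ψ g) f h = (l : ℂ) * BF α φ f h - BF α ψ f h := by
  rw [BF, BF, BF, Finset.mul_sum, ← Finset.sum_sub_distrib]
  refine Finset.sum_congr rfl fun x _ => ?_
  rw [Finset.mul_sum, ← Finset.sum_sub_distrib]
  refine Finset.sum_congr rfl fun y _ => ?_
  simp only [ContinuousLinearMap.sub_apply, ContinuousLinearMap.smul_apply]
  rw [inner_sub_left, inner_smul_left]
  simp [Complex.conj_ofReal]

lemma span_eq_range :
    Submodule.span ℂ {x : D.K | ∃ g ξ, x = D.rep g (D.V ξ)} = LinearMap.range (elF α D) := by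
  apply le_antisymm
  · rw [Submodule.span_le]
    rintro x ⟨g, ξ, rfl⟩
    exact ⟨Finsupp.single g ξ, elF_single α D g ξ⟩
  · rintro x ⟨f, rfl⟩
    rw [elF_eq_sum α D (subset_refl f.support)]
    exact Submodule.sum_mem _ fun x _ => Submodule.subset_span ⟨x, f x, rfl⟩

lemma dense_range_elF : Dense ((LinearMap.range (elF α D) : Submodule ℂ D.K) : Set D.K) := by
  rw [Submodule.dense_iff_topologicalClosure_eq_top, ← span_eq_range α D]
  exact D.minimal

lemma eq_of_inner_elF {x y : D.K} (h : ∀ f, ⟪x, elF α D f⟫ = ⟪y, elF α D f⟫) : x = y := by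
  refine ext_inner_right ℂ fun v => ?_
  have heq : Set.EqOn (fun v => (⟪x, v⟫ : ℂ)) (fun v => (⟪y, v⟫ : ℂ))
      ((LinearMap.range (elF α D) : Submodule ℂ D.K) : Set D.K) := by
    rintro v ⟨f, rfl⟩
    exact h f
  have hcl := heq.closure (continuous_const.inner continuous_id)
    (continuous_const.inner continuous_id)
  exact hcl (x := v) (by rw [(dense_range_elF α D).closure_eq]; trivial)

lemma CLMeq {A B : D.K →L[ℂ] D.K}
    (h : ∀ h f, ⟪A (elF α D h), elF α D f⟫ = ⟪B (elF α D h), elF α D f⟫) : A = B := by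
  have h1 : ∀ h, A (elF α D h) = B (elF α D h) := fun h' =>
    eq_of_inner_elF α D (h h')
  have heq : Set.EqOn ⇑A ⇑B ((LinearMap.range (elF α D) : Submodule ℂ D.K) : Set D.K) := by
    rintro v ⟨f, rfl⟩
    exact h1 f
  have hcl := heq.closure A.continuous B.continuous
  apply ContinuousLinearMap.coeFn_injective
  funext v
  exact hcl (x := v) (by rw [(dense_range_elF α D).closure_eq]; trivial)

lemma CLMeq_gen {A B : D.K →L[ℂ] D.K}
    (h : ∀ x ξ y η, ⟪A (D.rep x (D.V ξ)), D.rep y (D.V η)⟫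
      = ⟪B (D.rep x (D.V ξ)), D.rep y (D.V η)⟫) : A = B := by
  refine CLMeq α D fun h' f => ?_
  rw [elF_eq_sum α D (subset_refl h'.support), elF_eq_sum α D (subset_refl f.support),
    map_sum, map_sum, sum_inner, sum_inner]
  refine Finset.sum_congr rfl fun x _ => ?_
  rw [inner_sum, inner_sum]
  exact Finset.sum_congr rfl fun y _ => h x (h' x) y (f y)

lemma BF_sub_left (χ : G → H →L[ℂ] H) (f f' h : G →₀ H) :
    BF α χ (f - f') h = BF α χ f h - BF α χ f' h := by
  have h1 := BF_add_left α χ (f - f') f' h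
  rw [sub_add_cancel] at h1
  linear_combination -h1
lemma BF_sub_right (χ : G → H →L[ℂ] H) (f h h' : G →₀ H) :
    BF α χ f (h - h') = BF α χ f h - BF α χ f h' := by
  have h1 := BF_add_right α χ f (h - h') h'
  rw [sub_add_cancel] at h1
  linear_combination -h1

variable (hα : IsInvolution G α) (hφ : IsAlphaCP α φ) {ψ : G → H →L[ℂ] H}
  (hψ : IsAlphaCP α ψ) (l : ℝ) (hl : 0 < l)
  (hcp : IsAlphaCP α (fun g => (l : ℂ) • φ g - ψ g))

include hψ in
lemma BF_herm (f h : G →₀ H) : BF α ψ h f = conj (BF α ψ f h) :=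
  sesq_herm (BF α ψ) (BF_add_left α ψ) (BF_add_right α ψ) (BF_smul_left α ψ)
    (BF_smul_right α ψ) (BF_nonneg α hψ) f h

include hα hφ hcp in
lemma BF_re_le (f : G →₀ H) : (BF α ψ f f).re ≤ l * ‖elF α D f‖ ^ 2 := by
  have h0 := BF_nonneg α hcp f
  rw [BF_dom α l f f, BF_phi_diag α D hφ hα f] at h0
  have h1 := (Complex.nonneg_iff.mp h0).1
  have h2 : ((l : ℂ) * (‖elF α D f‖ : ℂ) ^ 2 - BF α ψ f f).re
      = l * ‖elF α D f‖ ^ 2 - (BF α ψ f f).re := by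
    rw [Complex.sub_re]
    norm_cast
  rw [h2] at h1
  linarith

include hα hφ hψ hl hcp in
lemma BF_bound (f h : G →₀ H) :
    ‖BF α ψ f h‖ ≤ l * (‖elF α D f‖ * ‖elF α D h‖) := by
  have hcs := sesq_cs (BF α ψ) (BF_add_left α ψ) (BF_add_right α ψ) (BF_smul_left α ψ)
    (BF_smul_right α ψ) (BF_nonneg α hψ) f h
  have hf := BF_re_le α D hα hφ l hcp f
  have hh := BF_re_le α D hα hφ l hcp h
  have hf0 : 0 ≤ (BF α ψ f f).re := (Complex.nonneg_iff.mp (BF_nonneg α hψ f)).1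
  have hh0 : 0 ≤ (BF α ψ h h).re := (Complex.nonneg_iff.mp (BF_nonneg α hψ h)).1
  have hR : 0 ≤ l * (‖elF α D f‖ * ‖elF α D h‖) := by positivity
  have h2 : ‖BF α ψ f h‖ ^ 2 ≤ (l * (‖elF α D f‖ * ‖elF α D h‖)) ^ 2 := by
    nlinarith [norm_nonneg (elF α D f), norm_nonneg (elF α D h), hl.le]
  nlinarith [norm_nonneg (BF α ψ f h)]

include hα hφ hψ hl hcp in
lemma BF_wd_left (f f' h : G →₀ H) (hee : elF α D f = elF α D f') :
    BF α ψ f h = BF α ψ f' h := by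
  have h0 : elF α D (f - f') = 0 := by rw [map_sub, hee, sub_self]
  have hb := BF_bound α D hα hφ hψ l hl hcp (f - f') h
  rw [h0] at hb
  simp only [norm_zero, zero_mul, mul_zero] at hb
  have : BF α ψ (f - f') h = 0 := norm_le_zero_iff.mp hb
  rw [BF_sub_left] at this
  linear_combination this

include hα hφ hψ hl hcp in
lemma BF_wd_right (f h h' : G →₀ H) (hee : elF α D h = elF α D h') :
    BF α ψ f h = BF α ψ f h' := by
  have := BF_wd_left α D hα hφ hψ l hl hcp h h' f hee
  rw [BF_herm α hψ h f, BF_herm α hψ h' f, this]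

/-- choice of a preimage under `elF` -/
def preF (D : KreinDilation G α H φ) (u : LinearMap.range (elF α D)) : G →₀ H :=
  (LinearMap.mem_range.mp u.2).choose

lemma preF_spec (u : LinearMap.range (elF α D)) : elF α D (preF α D u) = ↑u :=
  (LinearMap.mem_range.mp u.2).choose_spec

lemma denseRange_subtypeL :
    DenseRange ⇑(LinearMap.range (elF α D)).subtypeL := by
  have h := dense_range_elF α D
  rw [DenseRange, Submodule.coe_subtypeL', Submodule.coe_subtype]
  rwa [Subtype.range_coe]

lemma subtypeL_bound :
    ∀ x : LinearMap.range (elF α D), ‖x‖ ≤ ((1 : NNReal) : ℝ) * ‖(LinearMap.range (elF α D)).subtypeL x‖ := by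
  intro x
  simp [Submodule.coe_norm]

include hα hφ hψ hl hcp in
/-- the functional `elF f ↦ BF ψ f h` on the range of `elF`. -/
noncomputable def glin (h : G →₀ H) : (LinearMap.range (elF α D)) →L[ℂ] ℂ :=
  LinearMap.mkContinuous
    { toFun := fun u => BF α ψ (preF α D u) h
      map_add' := fun u v => by
        show BF α ψ (preF α D (u + v)) h = BF α ψ (preF α D u) h + BF α ψ (preF α D v) h
        have h1 : elF α D (preF α D (u + v)) = elF α D (preF α D u + preF α D v) := by
          rw [map_add, preF_spec, preF_spec, preF_spec, Submodule.coe_add]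
        rw [BF_wd_left α D hα hφ hψ l hl hcp _ _ h h1, BF_add_left]
      map_smul' := fun c u => by
        show BF α ψ (preF α D (c • u)) h = (RingHom.id ℂ) c * BF α ψ (preF α D u) h
        have h1 : elF α D (preF α D (c • u)) = elF α D (c • preF α D u) := by
          rw [map_smul, preF_spec, preF_spec, Submodule.coe_smul]
        rw [BF_wd_left α D hα hφ hψ l hl hcp _ _ h h1, BF_smul_left]
        rfl }
    (l * ‖elF α D h‖)
    (fun u => by
      have hb := BF_bound α D hα hφ hψ l hl hcp (preF α D u) h
      rw [preF_spec] at hb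
      calc ‖BF α ψ (preF α D u) h‖ ≤ l * (‖(u : D.K)‖ * ‖elF α D h‖) := hb
        _ = l * ‖elF α D h‖ * ‖u‖ := by rw [← Submodule.coe_norm]; ring)

include hα hφ hψ hl hcp in
lemma glin_apply (h : G →₀ H) (u : LinearMap.range (elF α D)) :
    glin α D hα hφ hψ l hl hcp h u = BF α ψ (preF α D u) h := rfl

include hα hφ hψ hl hcp in
lemma glin_norm (h : G →₀ H) : ‖glin α D hα hφ hψ l hl hcp h‖ ≤ l * ‖elF α D h‖ :=
  LinearMap.mkContinuous_norm_le _ (by positivity) _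

include hα hφ hψ hl hcp in
/-- the extended functional on all of `D.K`. -/
noncomputable def kfun (h : G →₀ H) : D.K →L[ℂ] ℂ :=
  (glin α D hα hφ hψ l hl hcp h).extend (LinearMap.range (elF α D)).subtypeL

include hα hφ hψ hl hcp in
/-- the Radon-Nikodym vector. -/
noncomputable def wvec (h : G →₀ H) : D.K :=
  (InnerProductSpace.toDual ℂ D.K).symm (kfun α D hα hφ hψ l hl hcp h)

include hα hφ hψ hl hcp in
lemma wvec_inner (h f : G →₀ H) :
    ⟪wvec α D hα hφ hψ l hl hcp h, elF α D f⟫ = BF α ψ f h := by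
  rw [wvec, InnerProductSpace.toDual_symm_apply]
  have hm : elF α D f ∈ LinearMap.range (elF α D) := ⟨f, rfl⟩
  have h1 : elF α D f = (LinearMap.range (elF α D)).subtypeL ⟨elF α D f, hm⟩ := rfl
  rw [h1, kfun, ContinuousLinearMap.extend_eq _ (denseRange_subtypeL α D)
    (ContinuousLinearMap.isUniformEmbedding_of_bound _ (subtypeL_bound α D)).isUniformInducing,
    glin_apply]
  exact BF_wd_left α D hα hφ hψ l hl hcp _ _ h (by rw [preF_spec])

include hα hφ hψ hl hcp in
lemma wvec_norm (h : G →₀ H) : ‖wvec α D hα hφ hψ l hl hcp h‖ ≤ l * ‖elF α D h‖ := by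
  rw [wvec]
  rw [LinearIsometryEquiv.norm_map]
  refine le_trans (b := ((1 : NNReal) : ℝ) * ‖glin α D hα hφ hψ l hl hcp h‖)
    (ContinuousLinearMap.opNorm_extend_le (f := glin α D hα hφ hψ l hl hcp h)
      (e := (LinearMap.range (elF α D)).subtypeL) (h_dense := denseRange_subtypeL α D)
      (h_e := subtypeL_bound α D)) ?_
  simpa using glin_norm α D hα hφ hψ l hl hcp h

include hα hφ hψ hl hcp in
lemma wvec_wd (h h' : G →₀ H) (hee : elF α D h = elF α D h') :
    wvec α D hα hφ hψ l hl hcp h = wvec α D hα hφ hψ l hl hcp h' := by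
  refine eq_of_inner_elF α D fun f => ?_
  rw [wvec_inner, wvec_inner]
  exact BF_wd_right α D hα hφ hψ l hl hcp f h h' hee

include hα hφ hψ hl hcp in
lemma wvec_add (h h' : G →₀ H) :
    wvec α D hα hφ hψ l hl hcp (h + h')
      = wvec α D hα hφ hψ l hl hcp h + wvec α D hα hφ hψ l hl hcp h' := by
  refine eq_of_inner_elF α D fun f => ?_
  rw [wvec_inner, inner_add_left, wvec_inner, wvec_inner, BF_add_right]

include hα hφ hψ hl hcp in
lemma wvec_smul (c : ℂ) (h : G →₀ H) :
    wvec α D hα hφ hψ l hl hcp (c • h) = c • wvec α D hα hφ hψ l hl hcp h := by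
  refine eq_of_inner_elF α D fun f => ?_
  rw [wvec_inner, inner_smul_left, wvec_inner, BF_smul_right]

include hα hφ hψ hl hcp in
/-- The Radon–Nikodym operator on the dense range, as a continuous linear map. -/
noncomputable def TRc : (LinearMap.range (elF α D)) →L[ℂ] D.K :=
  LinearMap.mkContinuous
    { toFun := fun u => wvec α D hα hφ hψ l hl hcp (preF α D u)
      map_add' := fun u v => by
        show wvec α D hα hφ hψ l hl hcp (preF α D (u + v))
          = wvec α D hα hφ hψ l hl hcp (preF α D u) + wvec α D hα hφ hψ l hl hcp (preF α D v)
        rw [← wvec_add]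
        refine wvec_wd α D hα hφ hψ l hl hcp _ _ ?_
        rw [map_add, preF_spec, preF_spec, preF_spec, Submodule.coe_add]
      map_smul' := fun c u => by
        show wvec α D hα hφ hψ l hl hcp (preF α D (c • u))
          = (RingHom.id ℂ) c • wvec α D hα hφ hψ l hl hcp (preF α D u)
        simp only [RingHom.id_apply]
        rw [← wvec_smul]
        refine wvec_wd α D hα hφ hψ l hl hcp _ _ ?_
        rw [map_smul, preF_spec, preF_spec, Submodule.coe_smul] }
    l
    (fun u => by
      have := wvec_norm α D hα hφ hψ l hl hcp (preF α D u)
      rw [preF_spec] at this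
      calc ‖wvec α D hα hφ hψ l hl hcp (preF α D u)‖ ≤ l * ‖(u : D.K)‖ := this
        _ = l * ‖u‖ := by rw [← Submodule.coe_norm])

include hα hφ hψ hl hcp in
/-- The Radon–Nikodym operator. -/
noncomputable def TopRN : D.K →L[ℂ] D.K :=
  (TRc α D hα hφ hψ l hl hcp).extend (LinearMap.range (elF α D)).subtypeL

include hα hφ hψ hl hcp in
lemma TopRN_inner (h f : G →₀ H) :
    ⟪(TopRN α D hα hφ hψ l hl hcp) (elF α D h), elF α D f⟫ = BF α ψ f h := by
  have hm : elF α D h ∈ LinearMap.range (elF α D) := ⟨h, rfl⟩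
  have h1 : elF α D h = (LinearMap.range (elF α D)).subtypeL ⟨elF α D h, hm⟩ := rfl
  rw [h1, TopRN, ContinuousLinearMap.extend_eq _ (denseRange_subtypeL α D)
    (ContinuousLinearMap.isUniformEmbedding_of_bound _ (subtypeL_bound α D)).isUniformInducing]
  have h2 : (TRc α D hα hφ hψ l hl hcp) ⟨elF α D h, hm⟩
      = wvec α D hα hφ hψ l hl hcp (preF α D ⟨elF α D h, hm⟩) := rfl
  rw [h2, wvec_wd α D hα hφ hψ l hl hcp _ h (by rw [preF_spec]), wvec_inner]

end Aux

local notation "⟪" x ", " y "⟫" => @inner ℂ _ _ x y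

open ContinuousLinearMap in
theorem radon_nikodym_converse {G : Type*} [Group G] (α : G → G)
    {H : Type*} [NormedAddCommGroup H] [InnerProductSpace ℂ H] [CompleteSpace H]
    (φ ψ : G → H →L[ℂ] H) (hα : IsInvolution G α)
    (hφ : IsAlphaCP α φ) (hψ : IsAlphaCP α ψ)
    (D : KreinDilation G α H φ)
    (hdom : ∃ l > (0 : ℝ), IsAlphaCP α (fun g => (l : ℂ) • φ g - ψ g)) :
    ∃! T : D.K →L[ℂ] D.K,
      T.IsPositive ∧
      (∀ g : G, T ∘L D.rep g = D.rep g ∘L T) ∧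
      T ∘L D.J = D.J ∘L T ∧
      ∀ g : G, ψ g = adjoint D.V ∘L T ∘L D.rep g ∘L D.V := by
  classical
  obtain ⟨l, hl, hcp⟩ := hdom
  set T := TopRN α D hα hφ hψ l hl hcp with hTdef
  have hTgen : ∀ (x : G) (ξ : H) (y : G) (η : H),
      ⟪T (D.rep x (D.V ξ)), D.rep y (D.V η)⟫ = ⟪ψ ((α y)⁻¹ * x) ξ, η⟫ := by
    intro x ξ y η
    rw [← elF_single α D x ξ, ← elF_single α D y η, hTdef,
      TopRN_inner α D hα hφ hψ l hl hcp, BF_single_single]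
  -- property (2): commutes with the representation
  have hprop2 : ∀ g : G, T ∘L D.rep g = D.rep g ∘L T := by
    intro g
    refine CLMeq_gen α D fun x ξ y η => ?_
    have hL : ⟪(T ∘L D.rep g) (D.rep x (D.V ξ)), D.rep y (D.V η)⟫
        = ⟪ψ ((α y)⁻¹ * (g * x)) ξ, η⟫ := by
      simp only [ContinuousLinearMap.comp_apply]
      rw [repV_mul α D g x ξ, hTgen (g * x) ξ y η]
    have hadj : adjoint (D.rep g) (D.rep y (D.V η)) = D.rep (α (g⁻¹ * α y)) (D.V η) := by
      rw [adj_rep α D g]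
      simp only [ContinuousLinearMap.comp_apply]
      rw [JrepV α D, repV_mul α D, JrepV α D]
    have hR : ⟪(D.rep g ∘L T) (D.rep x (D.V ξ)), D.rep y (D.V η)⟫
        = ⟪ψ (((α y)⁻¹ * g) * x) ξ, η⟫ := by
      simp only [ContinuousLinearMap.comp_apply]
      rw [← ContinuousLinearMap.adjoint_inner_right (D.rep g), hadj, hTgen]
      have hgrp : (α (α (g⁻¹ * α y)))⁻¹ * x = ((α y)⁻¹ * g) * x := by
        rw [hα.1]
        group
      rw [hgrp]
    rw [hL, hR, mul_assoc]
  -- property (3): commutes with J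
  have hprop3 : T ∘L D.J = D.J ∘L T := by
    refine CLMeq_gen α D fun x ξ y η => ?_
    have hL : ⟪(T ∘L D.J) (D.rep x (D.V ξ)), D.rep y (D.V η)⟫
        = ⟪ψ ((α y)⁻¹ * α x) ξ, η⟫ := by
      simp only [ContinuousLinearMap.comp_apply]
      rw [JrepV α D, hTgen]
    have hR : ⟪(D.J ∘L T) (D.rep x (D.V ξ)), D.rep y (D.V η)⟫
        = ⟪ψ (y⁻¹ * x) ξ, η⟫ := by
      simp only [ContinuousLinearMap.comp_apply]
      rw [J_inner α D, JrepV α D, hTgen, hα.1]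
    have hker : ψ ((α y)⁻¹ * α x) = ψ (y⁻¹ * x) := by
      have h1 := (hψ.1 y⁻¹ x).1
      have h2 := (hψ.1 y⁻¹ x).2
      rw [hα.2.2] at h1
      rw [h1, h2]
    rw [hL, hR, hker]
  -- property (4)
  have hprop4 : ∀ g : G, ψ g = adjoint D.V ∘L T ∘L D.rep g ∘L D.V := by
    intro g
    ext ξ
    refine ext_inner_right ℂ fun η => ?_
    simp only [ContinuousLinearMap.comp_apply]
    rw [ContinuousLinearMap.adjoint_inner_left]
    have h1 : D.V η = D.rep 1 (D.V η) := by rw [D.rep_one]; rfl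
    rw [h1, hTgen]
    rw [hα.2.1, inv_one, one_mul]
  -- property (1): positivity
  have hpos : T.IsPositive := by
    rw [ContinuousLinearMap.isPositive_iff_complex]
    simp only [RCLike.re_to_complex]
    have hc : Continuous fun v : D.K => (⟪T v, v⟫ : ℂ) := T.continuous.inner continuous_id
    have hclosed : IsClosed {v : D.K |
        ((((⟪T v, v⟫ : ℂ).re : ℝ)) : ℂ) = ⟪T v, v⟫ ∧ 0 ≤ (⟪T v, v⟫ : ℂ).re} := by
      rw [Set.setOf_and]
      exact (isClosed_eq (Complex.continuous_ofReal.comp (Complex.continuous_re.comp hc)) hc).inter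
        (isClosed_le continuous_const (Complex.continuous_re.comp hc))
    have hmem : ((LinearMap.range (elF α D) : Submodule ℂ D.K) : Set D.K) ⊆ {v : D.K |
        ((((⟪T v, v⟫ : ℂ).re : ℝ)) : ℂ) = ⟪T v, v⟫ ∧ 0 ≤ (⟪T v, v⟫ : ℂ).re} := by
      rintro v ⟨f, rfl⟩
      have h1 : ⟪T (elF α D f), elF α D f⟫ = BF α ψ f f :=
        TopRN_inner α D hα hφ hψ l hl hcp f f
      have h0 := Complex.nonneg_iff.mp (BF_nonneg α hψ f)
      constructor
      · show ((((⟪T (elF α D f), elF α D f⟫ : ℂ).re : ℝ)) : ℂ) = ⟪T (elF α D f), elF α D f⟫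
        rw [h1]
        apply Complex.ext <;> simp [← h0.2]
      · show 0 ≤ (⟪T (elF α D f), elF α D f⟫ : ℂ).re
        rw [h1]
        exact h0.1
    intro x
    exact closure_minimal hmem hclosed
      (by rw [(dense_range_elF α D).closure_eq]; trivial)
  -- generator identity for any operator with the properties
  have hS : ∀ S : D.K →L[ℂ] D.K,
      (∀ g : G, S ∘L D.rep g = D.rep g ∘L S) → S ∘L D.J = D.J ∘L S →
      (∀ g : G, ψ g = adjoint D.V ∘L S ∘L D.rep g ∘L D.V) →
      ∀ (x : G) (ξ : H) (y : G) (η : H),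
        ⟪S (D.rep x (D.V ξ)), D.rep y (D.V η)⟫ = ⟪ψ ((α y)⁻¹ * x) ξ, η⟫ := by
    intro S hc hj he x ξ y η
    have hcomm_ap : ∀ (g : G) (u : D.K), S (D.rep g u) = D.rep g (S u) := by
      intro g u
      have := congrArg (fun A : D.K →L[ℂ] D.K => A u) (hc g)
      simpa using this
    have hj_ap : ∀ u : D.K, S (D.J u) = D.J (S u) := by
      intro u
      have := congrArg (fun A : D.K →L[ℂ] D.K => A u) hj
      simpa using this
    rw [← ContinuousLinearMap.adjoint_inner_left (D.rep y)]
    have h2 : adjoint (D.rep y) (S (D.rep x (D.V ξ)))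
        = S (D.rep (α (y⁻¹ * α x)) (D.V ξ)) :=
      calc adjoint (D.rep y) (S (D.rep x (D.V ξ)))
          = D.J (D.rep y⁻¹ (D.J (S (D.rep x (D.V ξ))))) := by
            rw [adj_rep α D y]; rfl
        _ = D.J (D.rep y⁻¹ (S (D.J (D.rep x (D.V ξ))))) := by rw [hj_ap]
        _ = D.J (S (D.rep y⁻¹ (D.J (D.rep x (D.V ξ))))) := by rw [hcomm_ap]
        _ = S (D.J (D.rep y⁻¹ (D.J (D.rep x (D.V ξ))))) := by rw [hj_ap]
        _ = S (D.rep (α (y⁻¹ * α x)) (D.V ξ)) := by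
            rw [JrepV α D, repV_mul α D, JrepV α D]
    rw [h2, ← ContinuousLinearMap.adjoint_inner_left D.V]
    have h3 : adjoint D.V (S (D.rep (α (y⁻¹ * α x)) (D.V ξ))) = ψ (α (y⁻¹ * α x)) ξ := by
      have := congrArg (fun A : H →L[ℂ] H => A ξ) (he (α (y⁻¹ * α x)))
      simpa using this.symm
    rw [h3, kernel_shift α hψ.1 hα y x]
  refine ⟨T, ⟨hpos, hprop2, hprop3, hprop4⟩, ?_⟩
  rintro T' ⟨_, hc', hj', he'⟩
  refine CLMeq_gen α D fun x ξ y η => ?_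
  rw [hS T' hc' hj' he' x ξ y η, hS T hprop2 hprop3 hprop4 x ξ y η]
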